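/- Let 0<q<1 and let a_1,…,a_r, b_1,…,b_s ≥ 0. Then: (1) if r>s there exists M≥0 such that f(x;q) is increasing for all x>M; (2) if r<s there exists M≥0 such that f(x;q) is decreasing for all x>M; (3) if Υ<0 (resp. Υ>0) there exists M≥0 such that g(x;q) is increasing (resp. decreasing) for all x>M. -/

import Mathlib

open Real Set

/-- The infinite q-Pochhammer symbol `(a;q)_∞ = ∏_{k≥0} (1 - a q^k)`. -/
noncomputable def qPochInf (a q : ℝ) : ℝ := ∏' k : ℕ, (1 - a * q ^ k)

/-- Jackson's q-gamma function for `0 < q < 1`: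
`Γ_q(x) = (q;q)_∞ / (q^x;q)_∞ · (1-q)^{1-x}`. -/
noncomputable def qGamma (q x : ℝ) : ℝ :=
  qPochInf q q / qPochInf (q ^ x) q * (1 - q) ^ (1 - x)

noncomputable def Lf (q u : ℝ) : ℝ := ∑' k : ℕ, Real.log (1 - u * q ^ k)
noncomputable def Sf (q u : ℝ) : ℝ := ∑' k : ℕ, q ^ k / (1 - u * q ^ k)

lemma one_sub_pos' {q : ℝ} (hq0 : 0 < q) (hq1 : q < 1) {u : ℝ} (hu : |u| < 1) (k : ℕ) :
    0 < 1 - u * q ^ k := by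
  have h1 : q ^ k ≤ 1 := pow_le_one₀ hq0.le hq1.le
  have h2 : 0 ≤ q ^ k := pow_nonneg hq0.le k
  have h3 : u * q ^ k ≤ |u| * q ^ k := mul_le_mul_of_nonneg_right (le_abs_self u) h2
  nlinarith [abs_nonneg u]

lemma summable_log' {q : ℝ} (hq0 : 0 < q) (hq1 : q < 1) {u : ℝ} (hu : |u| < 1) :
    Summable fun k : ℕ => Real.log (1 - u * q ^ k) := by
  apply Summable.of_norm_bounded (g := fun k => |u| / (1 - |u|) * q ^ k)
    ((summable_geometric_of_lt_one hq0.le hq1).mul_left _)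
  intro k
  have hk1 : q ^ k ≤ 1 := pow_le_one₀ hq0.le hq1.le
  have hk0 : 0 ≤ q ^ k := pow_nonneg hq0.le k
  have habs : u * q ^ k ≤ |u| * q ^ k := mul_le_mul_of_nonneg_right (le_abs_self u) hk0
  have habs2 : -(u * q ^ k) ≤ |u| * q ^ k := by
    have := neg_le_abs (u * q ^ k)
    calc -(u * q ^ k) ≤ |u * q ^ k| := this
      _ = |u| * q ^ k := by rw [abs_mul, abs_of_nonneg hk0]
  have hw : 0 < 1 - u * q ^ k := one_sub_pos' hq0 hq1 hu k
  have hu1 : 0 < 1 - |u| := by linarith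
  have hwlb : 1 - |u| ≤ 1 - u * q ^ k := by nlinarith [abs_nonneg u]
  rw [Real.norm_eq_abs, abs_le]
  have hinv : (1 - |u|)⁻¹ * (1 - |u|) = 1 := inv_mul_cancel₀ hu1.ne'
  constructor
  · have h := Real.log_le_sub_one_of_pos (x := (1 - u * q ^ k)⁻¹) (by positivity)
    rw [Real.log_inv] at h
    have h2 : (1 - u * q ^ k)⁻¹ - 1 = (u * q ^ k) / (1 - u * q ^ k) := by field_simp; ring
    rw [h2] at h
    have h3 : (u * q ^ k) / (1 - u * q ^ k) ≤ |u| / (1 - |u|) * q ^ k := by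
      rw [div_le_iff₀ hw, div_mul_eq_mul_div, div_mul_eq_mul_div, le_div_iff₀ hu1]
      nlinarith [abs_nonneg u, mul_nonneg (abs_nonneg u) hk0]
    linarith
  · have h := Real.log_le_sub_one_of_pos hw
    have h4 : |u| * q ^ k ≤ |u| / (1 - |u|) * q ^ k := by
      apply mul_le_mul_of_nonneg_right ?_ hk0
      rw [le_div_iff₀ hu1]
      nlinarith [abs_nonneg u]
    nlinarith

lemma summable_S' {q : ℝ} (hq0 : 0 < q) (hq1 : q < 1) {u : ℝ} (hu : |u| < 1) :
    Summable fun k : ℕ => q ^ k / (1 - u * q ^ k) := by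
  apply Summable.of_norm_bounded (g := fun k => (1 - |u|)⁻¹ * q ^ k)
    ((summable_geometric_of_lt_one hq0.le hq1).mul_left _)
  intro k
  have hk1 : q ^ k ≤ 1 := pow_le_one₀ hq0.le hq1.le
  have hk0 : 0 ≤ q ^ k := pow_nonneg hq0.le k
  have hw : 0 < 1 - u * q ^ k := one_sub_pos' hq0 hq1 hu k
  have hu1 : 0 < 1 - |u| := by linarith
  have habs : u * q ^ k ≤ |u| * q ^ k := mul_le_mul_of_nonneg_right (le_abs_self u) hk0
  have hwlb : 1 - |u| ≤ 1 - u * q ^ k := by nlinarith [abs_nonneg u]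
  have hinv : (1 - |u|)⁻¹ * (1 - |u|) = 1 := inv_mul_cancel₀ hu1.ne'
  rw [Real.norm_eq_abs, abs_of_nonneg (by positivity), div_le_iff₀ hw]
  nlinarith [mul_nonneg (show (0:ℝ) ≤ (1 - |u|)⁻¹ by positivity) hk0]

lemma qPochInf_eq_exp {q : ℝ} (hq0 : 0 < q) (hq1 : q < 1) {u : ℝ} (hu0 : 0 ≤ u) (hu1 : u < 1) :
    qPochInf u q = Real.exp (Lf q u) := by
  have h := Real.rexp_tsum_eq_tprod (f := fun k => 1 - u * q ^ k)
    (fun k => one_sub_pos' hq0 hq1 (by rwa [abs_of_nonneg hu0]) k)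
    (summable_log' hq0 hq1 (by rwa [abs_of_nonneg hu0]))
  rw [qPochInf, Lf, ← h]

lemma hasDerivAt_Lf {q : ℝ} (hq0 : 0 < q) (hq1 : q < 1) {u : ℝ} (hu : u ∈ Ioo (-q) q) :
    HasDerivAt (Lf q) (-(Sf q u)) u := by
  have hqabs : ∀ y ∈ Ioo (-q) q, |y| < 1 := fun y hy => by
    rw [abs_lt]; exact ⟨by linarith [hy.1], by linarith [hy.2]⟩
  have key : HasDerivAt (fun z => ∑' k : ℕ, Real.log (1 - z * q ^ k))
      (∑' k : ℕ, -q ^ k / (1 - u * q ^ k)) u := by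
    apply hasDerivAt_tsum_of_isPreconnected
      (u := fun k : ℕ => (1 - q)⁻¹ * q ^ k)
      ((summable_geometric_of_lt_one hq0.le hq1).mul_left _)
      isOpen_Ioo (convex_Ioo (-q) q).isPreconnected
      (g := fun k y => Real.log (1 - y * q ^ k))
      (g' := fun k y => -q ^ k / (1 - y * q ^ k)) ?_ ?_
      (y₀ := 0) ?_ ?_ hu
    · intro k y hy
      have hw : 0 < 1 - y * q ^ k := one_sub_pos' hq0 hq1 (hqabs y hy) k
      have h1 : HasDerivAt (fun y : ℝ => 1 - y * q ^ k) (-(q ^ k)) y := by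
        simpa using (hasDerivAt_mul_const (q ^ k) (x := y)).const_sub 1
      have := h1.log hw.ne'
      simpa [neg_div] using this
    · intro k y hy
      have hk0 : 0 ≤ q ^ k := pow_nonneg hq0.le k
      have hk1 : q ^ k ≤ 1 := pow_le_one₀ hq0.le hq1.le
      have hyq : |y| < q := abs_lt.2 hy
      have habs : y * q ^ k ≤ |y| * q ^ k := mul_le_mul_of_nonneg_right (le_abs_self y) hk0
      have hw : 1 - q ≤ 1 - y * q ^ k := by nlinarith [abs_nonneg y]
      have hw0 : 0 < 1 - y * q ^ k := by linarith [hq1]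
      have hq' : 0 < 1 - q := by linarith
      have hinv : (1 - q)⁻¹ * (1 - q) = 1 := inv_mul_cancel₀ hq'.ne'
      rw [Real.norm_eq_abs, abs_div, abs_neg, abs_of_nonneg hk0, abs_of_pos hw0,
        div_le_iff₀ hw0]
      nlinarith [mul_nonneg (show (0:ℝ) ≤ (1 - q)⁻¹ by positivity) hk0]
    · exact ⟨by linarith [hq0], hq0⟩
    · simpa using summable_zero
  have heq : (∑' k : ℕ, -q ^ k / (1 - u * q ^ k)) = -(Sf q u) := by
    rw [Sf, ← tsum_neg]
    congr 1; ext k; rw [neg_div]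
  rw [heq] at key
  exact key

lemma Sf_lower {q : ℝ} (hq0 : 0 < q) (hq1 : q < 1) {u : ℝ} (hu0 : 0 ≤ u) (hu1 : u < 1) :
    (1 - q)⁻¹ ≤ Sf q u := by
  have hgeo : Summable fun k : ℕ => q ^ k := summable_geometric_of_lt_one hq0.le hq1
  rw [← tsum_geometric_of_lt_one hq0.le hq1]
  apply Summable.tsum_le_tsum ?_ hgeo (summable_S' hq0 hq1 (by rwa [abs_of_nonneg hu0]))
  intro k
  have hw : 0 < 1 - u * q ^ k := one_sub_pos' hq0 hq1 (by rwa [abs_of_nonneg hu0]) k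
  have hk0 : 0 ≤ q ^ k := pow_nonneg hq0.le k
  rw [le_div_iff₀ hw]
  nlinarith [mul_nonneg (mul_nonneg hu0 hk0) hk0]

lemma Sf_upper {q : ℝ} (hq0 : 0 < q) (hq1 : q < 1) {u : ℝ} (hu0 : 0 ≤ u) (hu1 : u < 1) :
    Sf q u ≤ (1 - q)⁻¹ + u * (1 - u)⁻¹ * (1 - q)⁻¹ := by
  have hgeo : Summable fun k : ℕ => q ^ k := summable_geometric_of_lt_one hq0.le hq1
  have habs : |u| < 1 := by rwa [abs_of_nonneg hu0]
  have hbound : ∀ k : ℕ, q ^ k / (1 - u * q ^ k) ≤ (1 + u * (1 - u)⁻¹) * q ^ k := by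
    intro k
    have hw : 0 < 1 - u * q ^ k := one_sub_pos' hq0 hq1 habs k
    have hk0 : 0 ≤ q ^ k := pow_nonneg hq0.le k
    have hk1 : q ^ k ≤ 1 := pow_le_one₀ hq0.le hq1.le
    have hwu : 1 - u ≤ 1 - u * q ^ k := by nlinarith
    have hu' : (0:ℝ) < 1 - u := by linarith
    have hiu : (0:ℝ) ≤ (1 - u)⁻¹ := (inv_nonneg).2 hu'.le
    rw [div_le_iff₀ hw]
    have h1 : (1 - u)⁻¹ * (1 - u) = 1 := inv_mul_cancel₀ hu'.ne'
    nlinarith [mul_nonneg (mul_nonneg hu0 hiu) hk0,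
      mul_le_mul_of_nonneg_left hwu (mul_nonneg (mul_nonneg hu0 hiu) hk0)]
  calc Sf q u ≤ ∑' k : ℕ, (1 + u * (1 - u)⁻¹) * q ^ k :=
        Summable.tsum_le_tsum hbound (summable_S' hq0 hq1 habs) (hgeo.mul_left _)
    _ = (1 + u * (1 - u)⁻¹) * (1 - q)⁻¹ := by
        rw [tsum_mul_left, tsum_geometric_of_lt_one hq0.le hq1]
    _ = (1 - q)⁻¹ + u * (1 - u)⁻¹ * (1 - q)⁻¹ := by ring

lemma exists_M' {q : ℝ} (hq0 : 0 < q) (hq1 : q < 1) {ε : ℝ} (hε : 0 < ε) :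
    ∃ M : ℝ, 1 ≤ M ∧ ∀ x, M < x → q ^ x < ε := by
  refine ⟨max 1 (Real.log ε / Real.log q), le_max_left _ _, fun x hx => ?_⟩
  have hlq : Real.log q < 0 := Real.log_neg hq0 hq1
  have hx2 : Real.log ε / Real.log q < x := lt_of_le_of_lt (le_max_right _ _) hx
  have h3 : Real.log q * x < Real.log ε := by
    rw [div_lt_iff_of_neg hlq] at hx2
    linarith [hx2]
  calc q ^ x = Real.exp (Real.log q * x) := Real.rpow_def_of_pos hq0 x
    _ < Real.exp (Real.log ε) := Real.exp_lt_exp.2 h3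
    _ = ε := Real.exp_log hε

set_option maxHeartbeats 2000000 in
theorem stmt0 (q : ℝ) (hq0 : 0 < q) (hq1 : q < 1) (r s : ℕ)
    (a : Fin r → ℝ) (b : Fin s → ℝ) (ha : ∀ i, 0 ≤ a i) (hb : ∀ j, 0 ≤ b j)
    (f g : ℝ → ℝ)
    (hf : f = fun x => (∏ i, qGamma q (x + a i)) / ∏ j, qGamma q (x + b j))
    (hg : g = fun x => (1 - q) ^ (((r : ℝ) - (s : ℝ)) * x) * f x) :
    (r > s → ∃ M : ℝ, 0 ≤ M ∧ StrictMonoOn f (Ioi M)) ∧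
    (r < s → ∃ M : ℝ, 0 ≤ M ∧ StrictAntiOn f (Ioi M)) ∧
    ((∑ i, q ^ a i) - (∑ j, q ^ b j) < 0 → ∃ M : ℝ, 0 ≤ M ∧ StrictMonoOn g (Ioi M)) ∧
    (0 < (∑ i, q ^ a i) - (∑ j, q ^ b j) → ∃ M : ℝ, 0 ≤ M ∧ StrictAntiOn g (Ioi M)) := by
  classical
  have hq' : 0 < 1 - q := by linarith
  set lq := Real.log q with hlqdef
  set l1q := Real.log (1 - q) with hl1qdef
  have hlq : lq < 0 := Real.log_neg hq0 hq1
  have hl1q : l1q < 0 := Real.log_neg hq' (by linarith)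
  set β : ℝ := (1 - q)⁻¹ with hβdef
  have hβ : 0 < β := by positivity
  -- rpow facts
  have hrpow_pos : ∀ y : ℝ, (0:ℝ) < q ^ y := fun y => Real.rpow_pos_of_pos hq0 y
  have hrpow_lt : ∀ {y : ℝ}, 1 < y → q ^ y < q := by
    intro y hy
    calc q ^ y < q ^ (1:ℝ) := Real.rpow_lt_rpow_of_exponent_gt hq0 hq1 hy
      _ = q := Real.rpow_one q
  have hrpow_le : ∀ {y z : ℝ}, y ≤ z → q ^ z ≤ q ^ y :=
    fun h => Real.rpow_le_rpow_of_exponent_ge hq0 hq1.le h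
  -- the log-series functions
  set F : ℝ → ℝ := fun x => (∑ i, (Lf q q - Lf q (q ^ (x + a i)) + (1 - (x + a i)) * l1q))
      - ∑ j, (Lf q q - Lf q (q ^ (x + b j)) + (1 - (x + b j)) * l1q) with hFdef
  set DF : ℝ → ℝ := fun x => (∑ i, (Sf q (q ^ (x + a i)) * (q ^ (x + a i) * lq) - l1q))
      - ∑ j, (Sf q (q ^ (x + b j)) * (q ^ (x + b j) * lq) - l1q) with hDFdef
  -- derivative of one phi-term
  have hφ : ∀ (c x : ℝ), 0 ≤ c → 1 < x →
      HasDerivAt (fun t : ℝ => Lf q q - Lf q (q ^ (t + c)) + (1 - (t + c)) * l1q)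
        (Sf q (q ^ (x + c)) * (q ^ (x + c) * lq) - l1q) x := by
    intro c x hc hx
    have hy : 1 < x + c := by linarith
    have hmem : q ^ (x + c) ∈ Ioo (-q) q := ⟨by linarith [hrpow_pos (x + c)], hrpow_lt hy⟩
    have hb1 : HasDerivAt (fun t : ℝ => t + c) 1 x := (hasDerivAt_id x).add_const c
    have h1 : HasDerivAt (fun t : ℝ => q ^ (t + c)) (q ^ (x + c) * lq * 1) x :=
      ((Real.hasStrictDerivAt_const_rpow hq0 (x + c)).hasDerivAt).comp x hb1
    have h2 : HasDerivAt (fun t : ℝ => Lf q (q ^ (t + c)))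
        (-(Sf q (q ^ (x + c))) * (q ^ (x + c) * lq * 1)) x :=
      (hasDerivAt_Lf hq0 hq1 hmem).comp_of_eq x h1 rfl
    have h3 : HasDerivAt (fun t : ℝ => (1 - (t + c)) * l1q) (-1 * l1q) x := by
      have h : HasDerivAt (fun t : ℝ => 1 - (t + c)) (-1) x :=
        ((hasDerivAt_id x).add_const c).const_sub 1
      exact h.mul_const l1q
    have h4 := (h2.const_sub (Lf q q)).add h3
    refine h4.congr_deriv ?_
    ring
  have hFderiv : ∀ x : ℝ, 1 < x → HasDerivAt F (DF x) x := by
    intro x hx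
    exact (HasDerivAt.fun_sum fun i _ => hφ (a i) x (ha i) hx).sub
      (HasDerivAt.fun_sum fun j _ => hφ (b j) x (hb j) hx)
  -- f = exp F on (1, ∞)
  have hqGamma_exp : ∀ y : ℝ, 1 < y →
      qGamma q y = Real.exp (Lf q q - Lf q (q ^ y) + (1 - y) * l1q) := by
    intro y hy
    have h1 : qPochInf q q = Real.exp (Lf q q) := qPochInf_eq_exp hq0 hq1 hq0.le hq1
    have h2 : qPochInf (q ^ y) q = Real.exp (Lf q (q ^ y)) :=
      qPochInf_eq_exp hq0 hq1 (hrpow_pos y).le (lt_trans (hrpow_lt hy) hq1)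
    have h3 : (1 - q) ^ (1 - y) = Real.exp ((1 - y) * l1q) := by
      rw [Real.rpow_def_of_pos hq', hl1qdef, mul_comm]
    rw [qGamma, h1, h2, h3, ← Real.exp_sub, ← Real.exp_add]
  have hfF : ∀ x : ℝ, 1 < x → f x = Real.exp (F x) := by
    intro x hx
    rw [hf]
    simp only
    have hp1 : (∏ i, qGamma q (x + a i)) =
        Real.exp (∑ i, (Lf q q - Lf q (q ^ (x + a i)) + (1 - (x + a i)) * l1q)) := by
      rw [Real.exp_sum]
      exact Finset.prod_congr rfl fun i _ => hqGamma_exp (x + a i) (by linarith [ha i])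
    have hp2 : (∏ j, qGamma q (x + b j)) =
        Real.exp (∑ j, (Lf q q - Lf q (q ^ (x + b j)) + (1 - (x + b j)) * l1q)) := by
      rw [Real.exp_sum]
      exact Finset.prod_congr rfl fun j _ => hqGamma_exp (x + b j) (by linarith [hb j])
    rw [hp1, hp2, ← Real.exp_sub]
  -- g = exp G on (1, ∞)
  set G : ℝ → ℝ := fun x => ((r : ℝ) - s) * x * l1q + F x with hGdef
  have hgG : ∀ x : ℝ, 1 < x → g x = Real.exp (G x) := by
    intro x hx
    rw [hg]
    simp only
    rw [hfF x hx, Real.rpow_def_of_pos hq', ← Real.exp_add]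
    congr 1
    simp only [hGdef, hl1qdef]
    ring
  have hGderiv : ∀ x : ℝ, 1 < x → HasDerivAt G (((r : ℝ) - s) * l1q + DF x) x := by
    intro x hx
    have h1 : HasDerivAt (fun x : ℝ => ((r : ℝ) - s) * x * l1q) (((r : ℝ) - s) * l1q) x := by
      simpa using (((hasDerivAt_id x).const_mul ((r : ℝ) - s)).mul_const l1q)
    exact h1.add (hFderiv x hx)
  -- rewrite DF
  set TA : ℝ → ℝ := fun x => ∑ i, Sf q (q ^ (x + a i)) * q ^ (x + a i) with hTAdef
  set TB : ℝ → ℝ := fun x => ∑ j, Sf q (q ^ (x + b j)) * q ^ (x + b j) with hTBdef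
  have hDF_eq : ∀ x : ℝ, DF x = lq * (TA x - TB x) - ((r : ℝ) - s) * l1q := by
    intro x
    have e1 : ∀ (n : ℕ) (cf : Fin n → ℝ),
        (∑ i, (Sf q (q ^ (x + cf i)) * (q ^ (x + cf i) * lq) - l1q))
          = lq * (∑ i, Sf q (q ^ (x + cf i)) * q ^ (x + cf i)) - n * l1q := by
      intro n cf
      rw [Finset.sum_sub_distrib, Finset.sum_const, Finset.card_univ, Fintype.card_fin,
        Finset.mul_sum]
      congr 1
      · exact Finset.sum_congr rfl fun i _ => by ring
      · simp [nsmul_eq_mul]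
    rw [hDFdef]
    simp only
    rw [e1 r a, e1 s b]
    ring
  -- per-term bounds
  have hterm : ∀ (x c : ℝ), 1 < x → 0 ≤ c →
      q ^ x * q ^ c * β ≤ Sf q (q ^ (x + c)) * q ^ (x + c) ∧
      Sf q (q ^ (x + c)) * q ^ (x + c) ≤ q ^ x * q ^ c * β + (q ^ x) ^ 2 * β ^ 2 := by
    intro x c hx hc
    have hu0 : 0 < q ^ (x + c) := hrpow_pos _
    have huq : q ^ (x + c) < q := hrpow_lt (by linarith)
    have hu1 : q ^ (x + c) < 1 := lt_trans huq hq1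
    have hle : q ^ (x + c) ≤ q ^ x := hrpow_le (by linarith)
    have hSl := Sf_lower hq0 hq1 hu0.le hu1
    have hSu := Sf_upper hq0 hq1 hu0.le hu1
    have hmon : (1 - q ^ (x + c))⁻¹ ≤ β := by
      rw [hβdef]
      exact inv_anti₀ hq' (by linarith)
    have hrw : q ^ (x + c) = q ^ x * q ^ c := Real.rpow_add hq0 x c
    have hxpos := hrpow_pos x
    have hcpos := hrpow_pos c
    constructor
    · have h1 : β * q ^ (x + c) ≤ Sf q (q ^ (x + c)) * q ^ (x + c) :=
        mul_le_mul_of_nonneg_right hSl hu0.le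
      rw [hrw] at h1
      nlinarith
    · have hSu2 : Sf q (q ^ (x + c)) ≤ β + q ^ (x + c) * β * β := by
        have h2 : q ^ (x + c) * (1 - q ^ (x + c))⁻¹ * (1 - q)⁻¹ ≤ q ^ (x + c) * β * β := by
          apply mul_le_mul_of_nonneg_right ?_ (le_of_lt hβ)
          exact mul_le_mul_of_nonneg_left hmon hu0.le
        rw [hβdef]
        linarith [hSu, h2]
      have h3 : Sf q (q ^ (x + c)) * q ^ (x + c) ≤ (β + q ^ (x + c) * β * β) * q ^ (x + c) :=
        mul_le_mul_of_nonneg_right hSu2 hu0.le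
      have h4 : q ^ (x + c) * q ^ (x + c) ≤ q ^ x * q ^ x :=
        mul_le_mul hle hle hu0.le hxpos.le
      calc Sf q (q ^ (x + c)) * q ^ (x + c) ≤ (β + q ^ (x + c) * β * β) * q ^ (x + c) := h3
        _ = β * q ^ (x + c) + (q ^ (x + c) * q ^ (x + c)) * β ^ 2 := by ring
        _ ≤ β * (q ^ x * q ^ c) + (q ^ x * q ^ x) * β ^ 2 := by
            rw [← hrw]; nlinarith
        _ = q ^ x * q ^ c * β + (q ^ x) ^ 2 * β ^ 2 := by ring
  -- summed bounds
  have hTA_bound : ∀ x : ℝ, 1 < x →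
      q ^ x * (∑ i, q ^ a i) * β ≤ TA x ∧
      TA x ≤ q ^ x * (∑ i, q ^ a i) * β + (r : ℝ) * ((q ^ x) ^ 2 * β ^ 2) := by
    intro x hx
    constructor
    · calc q ^ x * (∑ i, q ^ a i) * β = ∑ i, q ^ x * q ^ a i * β := by
            rw [Finset.mul_sum, Finset.sum_mul]
        _ ≤ TA x := Finset.sum_le_sum fun i _ => (hterm x (a i) hx (ha i)).1
    · calc TA x ≤ ∑ i : Fin r, (q ^ x * q ^ a i * β + (q ^ x) ^ 2 * β ^ 2) :=
            Finset.sum_le_sum fun i _ => (hterm x (a i) hx (ha i)).2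
        _ = q ^ x * (∑ i, q ^ a i) * β + (r : ℝ) * ((q ^ x) ^ 2 * β ^ 2) := by
            rw [Finset.sum_add_distrib, Finset.sum_const, Finset.card_univ, Fintype.card_fin,
              Finset.mul_sum, Finset.sum_mul]
            simp [nsmul_eq_mul]
  have hTB_bound : ∀ x : ℝ, 1 < x →
      q ^ x * (∑ j, q ^ b j) * β ≤ TB x ∧
      TB x ≤ q ^ x * (∑ j, q ^ b j) * β + (s : ℝ) * ((q ^ x) ^ 2 * β ^ 2) := by
    intro x hx
    constructor
    · calc q ^ x * (∑ j, q ^ b j) * β = ∑ j, q ^ x * q ^ b j * β := by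
            rw [Finset.mul_sum, Finset.sum_mul]
        _ ≤ TB x := Finset.sum_le_sum fun j _ => (hterm x (b j) hx (hb j)).1
    · calc TB x ≤ ∑ j : Fin s, (q ^ x * q ^ b j * β + (q ^ x) ^ 2 * β ^ 2) :=
            Finset.sum_le_sum fun j _ => (hterm x (b j) hx (hb j)).2
        _ = q ^ x * (∑ j, q ^ b j) * β + (s : ℝ) * ((q ^ x) ^ 2 * β ^ 2) := by
            rw [Finset.sum_add_distrib, Finset.sum_const, Finset.card_univ, Fintype.card_fin,
              Finset.mul_sum, Finset.sum_mul]
            simp [nsmul_eq_mul]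
  have hsuma_nonneg : (0:ℝ) ≤ ∑ i, q ^ a i :=
    Finset.sum_nonneg fun i _ => (hrpow_pos (a i)).le
  have hsumb_nonneg : (0:ℝ) ≤ ∑ j, q ^ b j :=
    Finset.sum_nonneg fun j _ => (hrpow_pos (b j)).le
  have hsuma_le : (∑ i, q ^ a i) ≤ (r : ℝ) := by
    calc (∑ i, q ^ a i) ≤ ∑ _i : Fin r, (1:ℝ) :=
          Finset.sum_le_sum fun i _ => Real.rpow_le_one hq0.le hq1.le (ha i)
      _ = (r : ℝ) := by simp
  have hsumb_le : (∑ j, q ^ b j) ≤ (s : ℝ) := by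
    calc (∑ j, q ^ b j) ≤ ∑ _j : Fin s, (1:ℝ) :=
          Finset.sum_le_sum fun j _ => Real.rpow_le_one hq0.le hq1.le (hb j)
      _ = (s : ℝ) := by simp
  -- monotonicity transfer helpers
  have mono_of : ∀ (M : ℝ) (φf H DH : ℝ → ℝ), 1 ≤ M →
      (∀ x : ℝ, 1 < x → φf x = Real.exp (H x)) →
      (∀ x : ℝ, 1 < x → HasDerivAt H (DH x) x) →
      (∀ x : ℝ, M < x → 0 < DH x) → StrictMonoOn φf (Ioi M) := by
    intro M φf H DH hM hEq hD hpos
    have hsub : ∀ x ∈ Ioi M, 1 < x := fun x hx => lt_of_le_of_lt hM hx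
    have hmono : StrictMonoOn H (Ioi M) := by
      apply strictMonoOn_of_deriv_pos (convex_Ioi M)
      · exact fun x hx => (hD x (hsub x hx)).continuousAt.continuousWithinAt
      · intro x hx
        rw [interior_Ioi] at hx
        rw [(hD x (hsub x hx)).deriv]
        exact hpos x hx
    intro x hx y hy hxy
    rw [hEq x (hsub x hx), hEq y (hsub y hy)]
    exact Real.exp_lt_exp.2 (hmono hx hy hxy)
  have anti_of : ∀ (M : ℝ) (φf H DH : ℝ → ℝ), 1 ≤ M →
      (∀ x : ℝ, 1 < x → φf x = Real.exp (H x)) →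
      (∀ x : ℝ, 1 < x → HasDerivAt H (DH x) x) →
      (∀ x : ℝ, M < x → DH x < 0) → StrictAntiOn φf (Ioi M) := by
    intro M φf H DH hM hEq hD hneg
    have hsub : ∀ x ∈ Ioi M, 1 < x := fun x hx => lt_of_le_of_lt hM hx
    have hanti : StrictAntiOn H (Ioi M) := by
      apply strictAntiOn_of_deriv_neg (convex_Ioi M)
      · exact fun x hx => (hD x (hsub x hx)).continuousAt.continuousWithinAt
      · intro x hx
        rw [interior_Ioi] at hx
        rw [(hD x (hsub x hx)).deriv]
        exact hneg x hx
    intro x hx y hy hxy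
    rw [hEq x (hsub x hx), hEq y (hsub y hy)]
    exact Real.exp_lt_exp.2 (hanti hx hy hxy)
  set K : ℝ := β + β ^ 2 with hKdef
  have hK : 0 < K := by positivity
  -- crude bound : |TA x - TB x| ≤ q^x * ((r+s) * K)
  have habs_bound : ∀ x : ℝ, 1 < x → |TA x - TB x| ≤ q ^ x * (((r : ℝ) + s) * K) := by
    intro x hx
    have hxp := hrpow_pos x
    have hx1 : q ^ x ≤ 1 := (lt_trans (hrpow_lt hx) hq1).le
    have hsq : (q ^ x) ^ 2 ≤ q ^ x := by nlinarith
    have hA := hTA_bound x hx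
    have hB := hTB_bound x hx
    have hA2 : TA x ≤ q ^ x * ((r : ℝ) * K) := by
      calc TA x ≤ q ^ x * (∑ i, q ^ a i) * β + (r : ℝ) * ((q ^ x) ^ 2 * β ^ 2) := hA.2
        _ ≤ q ^ x * (r : ℝ) * β + (r : ℝ) * (q ^ x * β ^ 2) := by
            nlinarith [mul_le_mul_of_nonneg_left hsuma_le (mul_nonneg hxp.le hβ.le),
              mul_le_mul_of_nonneg_left (mul_le_mul_of_nonneg_right hsq (sq_nonneg β))
                (Nat.cast_nonneg r : (0:ℝ) ≤ r)]
        _ = q ^ x * ((r : ℝ) * K) := by rw [hKdef]; ring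
    have hA1 : 0 ≤ TA x :=
      le_trans (mul_nonneg (mul_nonneg hxp.le hsuma_nonneg) hβ.le) hA.1
    have hB2 : TB x ≤ q ^ x * ((s : ℝ) * K) := by
      calc TB x ≤ q ^ x * (∑ j, q ^ b j) * β + (s : ℝ) * ((q ^ x) ^ 2 * β ^ 2) := hB.2
        _ ≤ q ^ x * (s : ℝ) * β + (s : ℝ) * (q ^ x * β ^ 2) := by
            nlinarith [mul_le_mul_of_nonneg_left hsumb_le (mul_nonneg hxp.le hβ.le),
              mul_le_mul_of_nonneg_left (mul_le_mul_of_nonneg_right hsq (sq_nonneg β))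
                (Nat.cast_nonneg s : (0:ℝ) ≤ s)]
        _ = q ^ x * ((s : ℝ) * K) := by rw [hKdef]; ring
    have hB1 : 0 ≤ TB x :=
      le_trans (mul_nonneg (mul_nonneg hxp.le hsumb_nonneg) hβ.le) hB.1
    rw [abs_le]
    constructor <;> nlinarith
  refine ⟨?_, ?_, ?_, ?_⟩
  -- Case 1 : r > s
  · intro hrs
    have hrs' : (s : ℝ) + 1 ≤ (r : ℝ) := by exact_mod_cast hrs
    set C : ℝ := (-lq) * (((r : ℝ) + s) * K) with hCdef
    have hC : 0 ≤ C := by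
      rw [hCdef]
      exact mul_nonneg (by linarith) (mul_nonneg (by positivity) hK.le)
    obtain ⟨M, hM1, hMε⟩ := exists_M' hq0 hq1 (ε := (-l1q) / (C + 1))
      (div_pos (by linarith) (by linarith))
    refine ⟨M, by linarith, ?_⟩
    apply mono_of M f F DF hM1 hfF hFderiv
    intro x hx
    have hx1 : 1 < x := lt_of_le_of_lt hM1 hx
    have hqx := hMε x hx
    have hxp := hrpow_pos x
    have hCx : C * q ^ x < -l1q := by
      have h1 : C * q ^ x ≤ C * ((-l1q) / (C + 1)) :=
        mul_le_mul_of_nonneg_left hqx.le hC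
      have h2 : C * ((-l1q) / (C + 1)) < -l1q := by
        rw [mul_div_assoc']
        rw [div_lt_iff₀ (by positivity)]
        nlinarith
      linarith
    have habs := habs_bound x hx1
    have h3 : lq * (TA x - TB x) ≥ -(C * q ^ x) := by
      have h4 : -|lq * (TA x - TB x)| ≤ lq * (TA x - TB x) := neg_abs_le _
      have h5 : |lq * (TA x - TB x)| = (-lq) * |TA x - TB x| := by
        rw [abs_mul, abs_of_neg hlq]
      have h6 : (-lq) * |TA x - TB x| ≤ (-lq) * (q ^ x * (((r : ℝ) + s) * K)) :=
        mul_le_mul_of_nonneg_left habs (by linarith)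
      rw [hCdef]
      nlinarith
    rw [hDF_eq x]
    have h7 : -l1q ≤ ((r : ℝ) - s) * (-l1q) :=
      le_mul_of_one_le_left (by linarith) (by linarith)
    nlinarith
  -- Case 2 : r < s
  · intro hrs
    have hrs' : (r : ℝ) + 1 ≤ (s : ℝ) := by exact_mod_cast hrs
    set C : ℝ := (-lq) * (((r : ℝ) + s) * K) with hCdef
    have hC : 0 ≤ C := by
      rw [hCdef]
      exact mul_nonneg (by linarith) (mul_nonneg (by positivity) hK.le)
    obtain ⟨M, hM1, hMε⟩ := exists_M' hq0 hq1 (ε := (-l1q) / (C + 1))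
      (div_pos (by linarith) (by linarith))
    refine ⟨M, by linarith, ?_⟩
    apply anti_of M f F DF hM1 hfF hFderiv
    intro x hx
    have hx1 : 1 < x := lt_of_le_of_lt hM1 hx
    have hqx := hMε x hx
    have hxp := hrpow_pos x
    have hCx : C * q ^ x < -l1q := by
      have h1 : C * q ^ x ≤ C * ((-l1q) / (C + 1)) :=
        mul_le_mul_of_nonneg_left hqx.le hC
      have h2 : C * ((-l1q) / (C + 1)) < -l1q := by
        rw [mul_div_assoc']
        rw [div_lt_iff₀ (by positivity)]
        nlinarith
      linarith
    have habs := habs_bound x hx1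
    have h3 : lq * (TA x - TB x) ≤ C * q ^ x := by
      have h4 : lq * (TA x - TB x) ≤ |lq * (TA x - TB x)| := le_abs_self _
      have h5 : |lq * (TA x - TB x)| = (-lq) * |TA x - TB x| := by
        rw [abs_mul, abs_of_neg hlq]
      have h6 : (-lq) * |TA x - TB x| ≤ (-lq) * (q ^ x * (((r : ℝ) + s) * K)) :=
        mul_le_mul_of_nonneg_left habs (by linarith)
      rw [hCdef]
      nlinarith
    rw [hDF_eq x]
    have h7 : ((r : ℝ) - s) * (-l1q) ≤ -(-l1q) := by nlinarith
    nlinarith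
  -- Case 3 : Υ < 0
  · intro hΥ
    set Υ : ℝ := (∑ i, q ^ a i) - (∑ j, q ^ b j) with hΥdef
    obtain ⟨M, hM1, hMε⟩ := exists_M' hq0 hq1
      (ε := (-Υ) * β / ((r : ℝ) * β ^ 2 + 1))
      (div_pos (mul_pos (by linarith) hβ) (by positivity))
    refine ⟨M, by linarith, ?_⟩
    apply mono_of M g G (fun x => ((r : ℝ) - s) * l1q + DF x) hM1 hgG hGderiv
    intro x hx
    have hx1 : 1 < x := lt_of_le_of_lt hM1 hx
    have hqx := hMε x hx
    have hxp := hrpow_pos x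
    have hA := (hTA_bound x hx1).2
    have hB := (hTB_bound x hx1).1
    have hdiff : TA x - TB x ≤ q ^ x * (Υ * β + (r : ℝ) * β ^ 2 * q ^ x) := by
      rw [hΥdef]
      nlinarith
    have hrq : (r : ℝ) * β ^ 2 * q ^ x < (-Υ) * β := by
      have h1 : (r : ℝ) * β ^ 2 * q ^ x ≤
          (r : ℝ) * β ^ 2 * ((-Υ) * β / ((r : ℝ) * β ^ 2 + 1)) :=
        mul_le_mul_of_nonneg_left hqx.le (by positivity)
      have h2 : (r : ℝ) * β ^ 2 * ((-Υ) * β / ((r : ℝ) * β ^ 2 + 1)) < (-Υ) * β := by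
        rw [mul_div_assoc']
        rw [div_lt_iff₀ (by positivity)]
        have hΥβ : 0 < (-Υ) * β := mul_pos (by linarith) hβ
        nlinarith [mul_nonneg (mul_nonneg (Nat.cast_nonneg r : (0:ℝ) ≤ r) (sq_nonneg β)) hΥβ.le]
      exact lt_of_le_of_lt h1 h2
    have hneg : TA x - TB x < 0 := by nlinarith
    have hgoal : 0 < lq * (TA x - TB x) := mul_pos_of_neg_of_neg hlq hneg
    rw [hDF_eq x]
    linarith
  -- Case 4 : Υ > 0
  · intro hΥ
    set Υ : ℝ := (∑ i, q ^ a i) - (∑ j, q ^ b j) with hΥdef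
    obtain ⟨M, hM1, hMε⟩ := exists_M' hq0 hq1
      (ε := Υ * β / ((s : ℝ) * β ^ 2 + 1))
      (div_pos (mul_pos (by linarith) hβ) (by positivity))
    refine ⟨M, by linarith, ?_⟩
    apply anti_of M g G (fun x => ((r : ℝ) - s) * l1q + DF x) hM1 hgG hGderiv
    intro x hx
    have hx1 : 1 < x := lt_of_le_of_lt hM1 hx
    have hqx := hMε x hx
    have hxp := hrpow_pos x
    have hA := (hTA_bound x hx1).1
    have hB := (hTB_bound x hx1).2
    have hdiff : q ^ x * (Υ * β - (s : ℝ) * β ^ 2 * q ^ x) ≤ TA x - TB x := by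
      rw [hΥdef]
      nlinarith
    have hsq : (s : ℝ) * β ^ 2 * q ^ x < Υ * β := by
      have h1 : (s : ℝ) * β ^ 2 * q ^ x ≤
          (s : ℝ) * β ^ 2 * (Υ * β / ((s : ℝ) * β ^ 2 + 1)) :=
        mul_le_mul_of_nonneg_left hqx.le (by positivity)
      have h2 : (s : ℝ) * β ^ 2 * (Υ * β / ((s : ℝ) * β ^ 2 + 1)) < Υ * β := by
        rw [mul_div_assoc']
        rw [div_lt_iff₀ (by positivity)]
        have hΥβ : 0 < Υ * β := mul_pos (by linarith) hβ
        nlinarith [mul_nonneg (mul_nonneg (Nat.cast_nonneg s : (0:ℝ) ≤ s) (sq_nonneg β)) hΥβ.le]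
      exact lt_of_le_of_lt h1 h2
    have hpos : 0 < TA x - TB x := by nlinarith
    have hgoal : lq * (TA x - TB x) < 0 := mul_neg_of_neg_of_pos hlq hpos
    rw [hDF_eq x]
    linarith
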